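/- Let Q be a set of nodes of an imprecise terrain and let P ⊆ WS(R⁻, Q), where R⁻ is the lowermost realization. Then PoWS(P) ⊆ PoWS(Q). -/

import Mathlib

open scoped Classical
open Set

/-- An imprecise terrain: a finite geometric graph with nodes in the plane,
each node carrying an elevation interval `[low v, high v]`. -/
structure ImpTerrain (V : Type) [Fintype V] [DecidableEq V] where
  pos : V → ℝ × ℝ
  posInj : Function.Injective pos
  adj : V → V → Prop
  adj_symm : ∀ u v, adj u v → adj v u
  adj_irrefl : ∀ v, ¬ adj v v
  low : V → ℝ
  high : V → ℝ

namespace ImpTerrain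

variable {V : Type} [Fintype V] [DecidableEq V]

/-- A realization assigns to each node an elevation within its interval. -/
def IsRealization (T : ImpTerrain V) (R : V → ℝ) : Prop :=
  ∀ v, T.low v ≤ R v ∧ R v ≤ T.high v

/-- Horizontal (plane) distance between two nodes. -/
noncomputable def hdist (T : ImpTerrain V) (u v : V) : ℝ := dist (T.pos u) (T.pos v)

/-- Slope (steepness of descent) of the edge from `p` to `q` in realization `R`. -/
noncomputable def slope (T : ImpTerrain V) (R : V → ℝ) (p q : V) : ℝ :=
  (R p - R q) / T.hdist p q

/-- `q` is a steepest-descent neighbor of `p` in `R`. -/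
def SDN (T : ImpTerrain V) (R : V → ℝ) (p q : V) : Prop :=
  T.adj p q ∧ 0 ≤ T.slope R p q ∧ ∀ r, T.adj p r → T.slope R p r ≤ T.slope R p q

/-- The neighborhood of a set of nodes. -/
def Nbhd (T : ImpTerrain V) (P : Set V) : Set V :=
  {s | s ∉ P ∧ ∃ t ∈ P, T.adj s t}

/-- `u` and `v` are connected by a path staying inside `P`. -/
def ConnIn (T : ImpTerrain V) (P : Set V) (u v : V) : Prop :=
  Relation.ReflTransGen (fun a b => T.adj a b ∧ a ∈ P ∧ b ∈ P) u v

/-- `P` is a local minimum in realization `R`: nonempty, connected, all nodes at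
the same elevation, strictly below its neighborhood. -/
def LocalMin (T : ImpTerrain V) (R : V → ℝ) (P : Set V) : Prop :=
  P.Nonempty ∧ (∀ u ∈ P, ∀ v ∈ P, T.ConnIn P u v) ∧
    (∀ u ∈ P, ∀ v ∈ P, R u = R v) ∧ (∀ u ∈ P, ∀ t ∈ T.Nbhd P, R u < R t)

def InLocalMin (T : ImpTerrain V) (R : V → ℝ) (p : V) : Prop :=
  ∃ P, T.LocalMin R P ∧ p ∈ P

/-- One step of discrete water flow. -/
def FlowStep (T : ImpTerrain V) (R : V → ℝ) (p q : V) : Prop :=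
  (∃ P, T.LocalMin R P ∧ p ∈ P ∧ q ∈ P ∧ T.adj p q) ∨
    (¬ T.InLocalMin R p ∧ T.SDN R p q)

/-- `p ⇝_R q` : water from `p` reaches `q` in realization `R`. -/
def FlowsTo (T : ImpTerrain V) (R : V → ℝ) : V → V → Prop :=
  Relation.ReflTransGen (T.FlowStep R)

/-- The (discrete) watershed of a set of nodes `Q` in realization `R`. -/
def WS (T : ImpTerrain V) (R : V → ℝ) (Q : Set V) : Set V :=
  {p | ∃ q ∈ Q, T.FlowsTo R p q}

/-- The potential watershed of `Q`. -/
def PoWS (T : ImpTerrain V) (Q : Set V) : Set V :=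
  {p | ∃ R, T.IsRealization R ∧ p ∈ T.WS R Q}

/-- A flow path: a simple path following steepest-descent edges that ends in,
and visits all nodes of, a local minimum. -/
def IsFlowPath (T : ImpTerrain V) (R : V → ℝ) (L : List V) : Prop :=
  L.Nodup ∧ L.Chain' (fun p q => T.SDN R p q) ∧
    ∃ P, T.LocalMin R P ∧ (∀ v ∈ P, v ∈ L) ∧ ∃ hne : L ≠ [], L.getLast hne ∈ P

/-- The `Q`-avoiding potential watershed of `S`: nodes having, in some
realization, a flow path to a node of `S` whose portion up to that node
avoids `Q`. -/
def AvWS (T : ImpTerrain V) (Q S : Set V) : Set V :=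
  {p | ∃ R, T.IsRealization R ∧ ∃ L, T.IsFlowPath R L ∧ ∃ s ∈ S,
    ∃ i j : Fin L.length, (i : ℕ) ≤ (j : ℕ) ∧ L.get i = p ∧ L.get j = s ∧
      ∀ k : Fin L.length, (i : ℕ) ≤ (k : ℕ) → (k : ℕ) ≤ (j : ℕ) → L.get k ∉ Q}

/-- The persistent watershed of `Q`. -/
def PsWS (T : ImpTerrain V) (Q : Set V) : Set V :=
  (T.AvWS Q (T.PoWS Q)ᶜ)ᶜ

/-- The core watershed of `Q`: nodes from which every induced flow path leads
to a node of `Q`. -/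
def CoWS (T : ImpTerrain V) (Q : Set V) : Set V :=
  {p | ∀ R, T.IsRealization R → ∀ L, T.IsFlowPath R L →
    ∀ i : Fin L.length, L.get i = p →
      ∃ q ∈ Q, ∃ j : Fin L.length, (i : ℕ) ≤ (j : ℕ) ∧ L.get j = q}

/-- Union of all node sets disjoint from `Q` that form a local minimum in some
realization. -/
def Vmin (T : ImpTerrain V) (Q : Set V) : Set V :=
  ⋃₀ {r | r ∩ Q = ∅ ∧ ∃ R, T.IsRealization R ∧ T.LocalMin R r}

/-- `S` contains a local minimum in every realization. -/
def AlwaysMin (T : ImpTerrain V) (S : Set V) : Prop :=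
  ∀ R, T.IsRealization R → ∃ P, T.LocalMin R P ∧ P ⊆ S

/-- An imprecise minimum: a minimal set containing a local minimum in every
realization. -/
def ImpreciseMin (T : ImpTerrain V) (S : Set V) : Prop :=
  T.AlwaysMin S ∧ ∀ S', S' ⊂ S → ¬ T.AlwaysMin S'

/-- A terrain is regular if every local minimum of the lowermost realization is
an imprecise minimum. -/
def Regular (T : ImpTerrain V) : Prop :=
  ∀ P, T.LocalMin T.low P → T.ImpreciseMin P

/-- A proxy of `S`: a node of `S` from which water can never reach a node
outside `S` in any realization. -/
def IsProxy (T : ImpTerrain V) (S : Set V) (p : V) : Prop :=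
  p ∈ S ∧ ∀ R, T.IsRealization R → ∀ q, q ∉ S → ¬ T.FlowsTo R p q

/-- `R'` is an `ε`-perturbation of `R`. -/
def Perturb (ε : ℝ) (R R' : V → ℝ) : Prop := ∀ v, |R' v - R v| ≤ ε

/-- `S` together with all `ε`-perturbations of its members (`S^ε`). -/
def Enlarge (S : Set (V → ℝ)) (ε : ℝ) : Set (V → ℝ) :=
  S ∪ {R' | ∃ R ∈ S, Perturb ε R R'}

/-- `Π(S)` : flow paths induced by realizations in `S`. -/
def FlowPathsOf (T : ImpTerrain V) (S : Set (V → ℝ)) : Set (List V) :=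
  {L | ∃ R ∈ S, T.IsFlowPath R L}

/-- A flow path is stable with respect to `S`. -/
def StableWrt (T : ImpTerrain V) (S : Set (V → ℝ)) (L : List V) : Prop :=
  ∃ ε > (0 : ℝ), ∃ R ∈ S, ∀ R', Perturb ε R R' → T.IsFlowPath R' L

/-- State of the sweep-plane minimum-removal algorithm. -/
structure SweepState (V : Type) where
  discovered : Set V
  final : V → Option ℝ
  proxies : Set V

def pendingS (st : SweepState V) (v : V) : Prop :=
  v ∈ st.discovered ∧ st.final v = none

/-- Pending component of `v`. -/
def pendComp (T : ImpTerrain V) (st : SweepState V) (v : V) : Set V :=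
  {u | Relation.ReflTransGen (fun a b => T.adj a b ∧ pendingS st a ∧ pendingS st b) v u}

/-- One step of the sweep algorithm, processing a `low` event `(v, false)` or a
`high` event `(v, true)`. -/
noncomputable def sweepStep (T : ImpTerrain V) (st : SweepState V) : V × Bool → SweepState V
  | (v, false) =>
    let st1 : SweepState V := ⟨insert v st.discovered, st.final, st.proxies⟩
    if ∃ u, T.adj v u ∧ (st.final u).isSome = true then
      ⟨st1.discovered,
        fun w => if w ∈ T.pendComp st1 v then some (T.low v) else st.final w,
        st.proxies⟩
    else st1
  | (v, true) =>
    if (st.final v).isSome = true then st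
    else
      ⟨st.discovered,
        fun w =>
          if w ∈ T.pendComp st v then some (sSup (T.low '' T.pendComp st v))
          else st.final w,
        insert v st.proxies⟩

noncomputable def sweepRun (T : ImpTerrain V) (evs : List (V × Bool)) : SweepState V :=
  evs.foldl T.sweepStep ⟨∅, fun _ => none, ∅⟩

/-- Elevation key of an event. -/
def eKey (T : ImpTerrain V) : V × Bool → ℝ
  | (v, false) => T.low v
  | (v, true) => T.high v

/-- A valid event list: all events, each once, sorted by elevation with low
events before high events at equal elevation. -/
def ValidEventList (T : ImpTerrain V) (evs : List (V × Bool)) : Prop :=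
  (∀ v : V, ∀ b : Bool, (v, b) ∈ evs) ∧ evs.Nodup ∧
    evs.Pairwise (fun e1 e2 =>
      T.eKey e1 < T.eKey e2 ∨ (T.eKey e1 = T.eKey e2 ∧ ¬(e1.2 = true ∧ e2.2 = false)))

/-- The realization `M` computed by the sweep algorithm. -/
noncomputable def sweepM (T : ImpTerrain V) (evs : List (V × Bool)) : V → ℝ :=
  fun v => ((T.sweepRun evs).final v).getD (T.high v)

end ImpTerrain

namespace ImpTerrain

variable {V : Type} [Fintype V] [DecidableEq V] (T : ImpTerrain V)

lemma adj_ne {u v : V} (h : T.adj u v) : u ≠ v := by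
  rintro rfl; exact T.adj_irrefl _ h

lemma hdist_pos {u v : V} (h : T.adj u v) : 0 < T.hdist u v := by
  have hne : T.pos u ≠ T.pos v := fun he => T.adj_ne h (T.posInj he)
  simpa [hdist] using dist_pos.2 hne

lemma slope_def (R : V → ℝ) (a b : V) :
    T.slope R a b = (R a - R b) / T.hdist a b := rfl

lemma flowStep_adj {R : V → ℝ} {a b : V} (h : T.FlowStep R a b) : T.adj a b := by
  rcases h with ⟨P, -, -, -, h⟩ | ⟨-, h, -, -⟩ <;> exact h

lemma flowsTo_of_connIn {R : V → ℝ} {P : Set V} (hP : T.LocalMin R P) {u v : V}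
    (h : T.ConnIn P u v) : T.FlowsTo R u v :=
  Relation.ReflTransGen.mono (p := T.FlowStep R)
    (fun a b (hab : T.adj a b ∧ a ∈ P ∧ b ∈ P) => Or.inl ⟨P, hP, hab.2.1, hab.2.2, hab.1⟩) u v h

lemma localMin_subset {R : V → ℝ} {P P' : Set V} (hP : T.LocalMin R P)
    (hP' : T.LocalMin R P') {a : V} (ha : a ∈ P) (ha' : a ∈ P') : P ⊆ P' := by
  intro u hu
  have hconn := hP.2.1 a ha u hu
  revert ha'
  induction hconn using Relation.ReflTransGen.head_induction_on with
  | refl => exact id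
  | @head s t hst h ih =>
    intro hs
    obtain ⟨hadj, hsP, htP⟩ := hst
    refine ih htP ?_
    by_contra htn
    have hNb : t ∈ T.Nbhd P' := ⟨htn, s, hs, T.adj_symm s t hadj⟩
    have h1 := hP'.2.2.2 s hs t hNb
    have h2 := hP.2.2.1 s hsP t htP
    linarith

lemma localMin_unique {R : V → ℝ} {P P' : Set V} (hP : T.LocalMin R P)
    (hP' : T.LocalMin R P') {a : V} (ha : a ∈ P) (ha' : a ∈ P') : P = P' :=
  Set.Subset.antisymm (T.localMin_subset hP hP' ha ha')
    (T.localMin_subset hP' hP ha' ha)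

lemma update_isRealization {R : V → ℝ} (hR : T.IsRealization R)
    (hle : ∀ v, T.low v ≤ T.high v) (p' : V) :
    T.IsRealization (Function.update R p' (T.low p')) := by
  intro v
  rcases eq_or_ne v p' with rfl | hv
  · rw [Function.update_self]; exact ⟨le_refl _, hle _⟩
  · rw [Function.update_of_ne hv]; exact hR v

/-- If `P` is a local minimum of `R` containing `x`, and `p'` belongs to `P` or its
neighborhood, with `low p' ≤ R x`, then after lowering `p'` to its lowest elevation,
water from `x` reaches `p'`. -/
lemma flow_to_lowered {R : V → ℝ} {P : Set V} {p' : V}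
    (hP : T.LocalMin R P)
    (hN : p' ∈ P ∨ p' ∈ T.Nbhd P)
    {x : V} (hx : x ∈ P) (hxp : x ≠ p')
    (hlx : T.low p' ≤ R x) :
    T.FlowsTo (Function.update R p' (T.low p')) x p' := by
  classical
  set R' := Function.update R p' (T.low p') with hR'def
  have hR'p' : R' p' = T.low p' := Function.update_self _ _ _
  have hR'ne : ∀ {v : V}, v ≠ p' → R' v = R v := fun hv => Function.update_of_ne hv _ _
  have helev : ∀ u ∈ P, R u = R x := fun u hu => hP.2.2.1 u hu x hx
  have hup' : ∀ u ∈ P, u ≠ p' → R' u = R x := fun u hu hu' => (hR'ne hu').trans (helev u hu)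
  have hnb : ∀ t ∈ T.Nbhd P, R x < R t := fun t ht => hP.2.2.2 x hx t ht
  -- key dichotomy for vertices of `P`
  have hD : ∀ a ∈ P, a ≠ p' →
      T.FlowsTo R' a p' ∨
        (¬ T.adj a p' ∧ ∀ a' ∈ P, a' ≠ p' → T.adj a a' → T.FlowStep R' a a') := by
    intro a haP hap
    have hR'a : R' a = R x := hup' a haP hap
    by_cases hlm : T.InLocalMin R' a
    · left
      obtain ⟨P'', hP'', haP''⟩ := hlm
      have hp'mem : p' ∈ P'' := by
        by_contra hp''
        have hnadj : ∀ u ∈ P'', ¬ T.adj p' u := by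
          intro u hu hadj
          have hmem : p' ∈ T.Nbhd P'' := ⟨hp'', u, hu, hadj⟩
          have h1 : R' a < R' p' := hP''.2.2.2 a haP'' p' hmem
          rw [hR'a, hR'p'] at h1
          exact absurd h1 (not_lt.mpr hlx)
        have hPR : T.LocalMin R P'' := by
          refine ⟨hP''.1, hP''.2.1, ?_, ?_⟩
          · intro u hu v hv
            have hu' : u ≠ p' := fun h => hp'' (h ▸ hu)
            have hv' : v ≠ p' := fun h => hp'' (h ▸ hv)
            have := hP''.2.2.1 u hu v hv
            rwa [hR'ne hu', hR'ne hv'] at this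
          · intro u hu t ht
            have hu' : u ≠ p' := fun h => hp'' (h ▸ hu)
            have ht' : t ≠ p' := by
              rintro rfl
              obtain ⟨-, w, hw, hadj⟩ := ht
              exact hnadj w hw hadj
            have := hP''.2.2.2 u hu t ht
            rwa [hR'ne hu', hR'ne ht'] at this
        have hPeq : P = P'' := T.localMin_unique hP hPR haP haP''
        rcases hN with hN | hN
        · exact hp'' (hPeq ▸ hN)
        · obtain ⟨-, w, hw, hadj⟩ := hN
          exact hnadj w (hPeq ▸ hw) hadj
      exact T.flowsTo_of_connIn hP'' (hP''.2.1 a haP'' p' hp'mem)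
    · by_cases hadj : T.adj a p'
      · left
        have hdpos := T.hdist_pos hadj
        have hslope : T.slope R' a p' = (R x - T.low p') / T.hdist a p' := by
          rw [T.slope_def, hR'a, hR'p']
        have hnn : 0 ≤ (R x - T.low p') / T.hdist a p' :=
          div_nonneg (by linarith) hdpos.le
        refine Relation.ReflTransGen.single (Or.inr ⟨hlm, hadj, ?_, ?_⟩)
        · rw [hslope]; exact hnn
        · intro r hr
          rcases eq_or_ne r p' with rfl | hrne
          · exact le_refl _
          rw [hslope]
          by_cases hrP : r ∈ P
          · have : T.slope R' a r = 0 := by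
              rw [T.slope_def, hR'a, hup' r hrP hrne, sub_self, zero_div]
            rw [this]; exact hnn
          · have hrN : r ∈ T.Nbhd P := ⟨hrP, a, haP, T.adj_symm a r hr⟩
            have hneg : T.slope R' a r < 0 := by
              rw [T.slope_def, hR'a, hR'ne hrne]
              exact div_neg_of_neg_of_pos (by linarith [hnb r hrN]) (T.hdist_pos hr)
            linarith
      · right
        refine ⟨hadj, ?_⟩
        intro a' ha'P ha'ne hadj'
        have hz : T.slope R' a a' = 0 := by
          rw [T.slope_def, hR'a, hup' a' ha'P ha'ne, sub_self, zero_div]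
        refine Or.inr ⟨hlm, hadj', ?_, ?_⟩
        · rw [hz]
        · intro r hr
          have hrne : r ≠ p' := fun h => hadj (h ▸ hr)
          rw [hz]
          by_cases hrP : r ∈ P
          · rw [T.slope_def, hR'a, hup' r hrP hrne, sub_self, zero_div]
          · have hrN : r ∈ T.Nbhd P := ⟨hrP, a, haP, T.adj_symm a r hr⟩
            have hneg : T.slope R' a r < 0 := by
              rw [T.slope_def, hR'a, hR'ne hrne]
              exact div_neg_of_neg_of_pos (by linarith [hnb r hrN]) (T.hdist_pos hr)
            linarith
  -- propagate along connectivity inside `P`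
  have hprop : ∀ u c : V, T.ConnIn P u c → T.FlowsTo R' c p' → T.FlowsTo R' u p' := by
    intro u c hconn
    induction hconn using Relation.ReflTransGen.head_induction_on with
    | refl => exact id
    | @head a b hstep h ih =>
      intro hc
      obtain ⟨hadj, haP, hbP⟩ := hstep
      rcases eq_or_ne a p' with rfl | hane
      · exact Relation.ReflTransGen.refl
      rcases hD a haP hane with h1 | ⟨hnadj, h2⟩
      · exact h1
      rcases eq_or_ne b p' with rfl | hbne
      · exact absurd hadj hnadj
      · exact Relation.ReflTransGen.head (h2 b hbP hbne hadj) (ih hc)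
  rcases hN with hp'P | hp'N
  · exact hprop x p' (hP.2.1 x hx p' hp'P) Relation.ReflTransGen.refl
  · obtain ⟨hp'nP, t, htP, hadjt⟩ := hp'N
    have htne : t ≠ p' := fun h => hp'nP (h ▸ htP)
    have htf : T.FlowsTo R' t p' := by
      rcases hD t htP htne with h | ⟨hnadj, -⟩
      · exact h
      · exact absurd (T.adj_symm p' t hadjt) hnadj
    exact hprop x t (hP.2.1 x hx t htP) htf

/-- Lowering a single vertex `p'` to its lowest elevation: a flow step either
survives or the flow diverts to `p'`. -/
lemma divert_step {R : V → ℝ} (hR : T.IsRealization R) (p' : V) {x y : V}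
    (hstep : T.FlowStep R x y) :
    T.FlowsTo (Function.update R p' (T.low p')) x y ∨
      T.FlowsTo (Function.update R p' (T.low p')) x p' := by
  classical
  set R' := Function.update R p' (T.low p') with hR'def
  have hR'p' : R' p' = T.low p' := Function.update_self _ _ _
  have hR'ne : ∀ {v : V}, v ≠ p' → R' v = R v := fun hv => Function.update_of_ne hv _ _
  by_cases hRp' : R p' = T.low p'
  · left
    have hRR : R' = R := by rw [hR'def, ← hRp', Function.update_eq_self]
    rw [hRR]
    exact Relation.ReflTransGen.single hstep
  have hlR : T.low p' < R p' := lt_of_le_of_ne (hR p').1 (Ne.symm hRp')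
  rcases eq_or_ne x p' with rfl | hxp'
  · exact Or.inr Relation.ReflTransGen.refl
  rcases hstep with ⟨P, hPmin, hxP, hyP, hadj⟩ | ⟨hnlm, hadjxy, hs0, hsmax⟩
  · by_cases hp'P : p' ∈ P
    · right
      have hRx : R x = R p' := hPmin.2.2.1 x hxP p' hp'P
      exact T.flow_to_lowered hPmin (Or.inl hp'P) hxP hxp' (by linarith)
    · by_cases hp'N : p' ∈ T.Nbhd P
      · by_cases hlx : T.low p' ≤ R x
        · exact Or.inr (T.flow_to_lowered hPmin (Or.inr hp'N) hxP hxp' hlx)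
        · push_neg at hlx
          left
          refine Relation.ReflTransGen.single (Or.inl ⟨P, ⟨hPmin.1, hPmin.2.1, ?_, ?_⟩, hxP, hyP, hadj⟩)
          · intro u hu v hv
            have hu' : u ≠ p' := fun h => hp'P (h ▸ hu)
            have hv' : v ≠ p' := fun h => hp'P (h ▸ hv)
            rw [hR'ne hu', hR'ne hv']; exact hPmin.2.2.1 u hu v hv
          · intro u hu t ht
            have hu' : u ≠ p' := fun h => hp'P (h ▸ hu)
            rw [hR'ne hu']
            rcases eq_or_ne t p' with rfl | ht'
            · rw [hR'p']
              have : R u = R x := hPmin.2.2.1 u hu x hxP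
              linarith
            · rw [hR'ne ht']; exact hPmin.2.2.2 u hu t ht
      · left
        refine Relation.ReflTransGen.single (Or.inl ⟨P, ⟨hPmin.1, hPmin.2.1, ?_, ?_⟩, hxP, hyP, hadj⟩)
        · intro u hu v hv
          have hu' : u ≠ p' := fun h => hp'P (h ▸ hu)
          have hv' : v ≠ p' := fun h => hp'P (h ▸ hv)
          rw [hR'ne hu', hR'ne hv']; exact hPmin.2.2.1 u hu v hv
        · intro u hu t ht
          have hu' : u ≠ p' := fun h => hp'P (h ▸ hu)
          have ht' : t ≠ p' := fun h => hp'N (h ▸ ht)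
          rw [hR'ne hu', hR'ne ht']; exact hPmin.2.2.2 u hu t ht
  · -- SDN step
    by_cases hlm' : T.InLocalMin R' x
    · right
      obtain ⟨P'', hP'', hxP''⟩ := hlm'
      have hp'mem : p' ∈ P'' := by
        by_contra hmem
        apply hnlm
        refine ⟨P'', ⟨hP''.1, hP''.2.1, ?_, ?_⟩, hxP''⟩
        · intro u hu v hv
          have hu' : u ≠ p' := fun h => hmem (h ▸ hu)
          have hv' : v ≠ p' := fun h => hmem (h ▸ hv)
          have := hP''.2.2.1 u hu v hv
          rwa [hR'ne hu', hR'ne hv'] at this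
        · intro u hu t ht
          have hu' : u ≠ p' := fun h => hmem (h ▸ hu)
          have := hP''.2.2.2 u hu t ht
          rw [hR'ne hu'] at this
          rcases eq_or_ne t p' with rfl | ht'
          · rw [hR'p'] at this; linarith
          · rwa [hR'ne ht'] at this
      exact T.flowsTo_of_connIn hP'' (hP''.2.1 x hxP'' p' hp'mem)
    · have hsR' : ∀ {a b : V}, a ≠ p' → b ≠ p' → T.slope R' a b = T.slope R a b := by
        intro a b hA hB; rw [T.slope_def, T.slope_def, hR'ne hA, hR'ne hB]
      have hsp' : T.adj x p' → T.slope R x p' ≤ T.slope R' x p' := by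
        intro hadj
        rw [T.slope_def, T.slope_def, hR'ne hxp', hR'p']
        have hd := T.hdist_pos hadj
        exact (div_le_div_iff_of_pos_right hd).mpr (by linarith)
      rcases eq_or_ne y p' with heq | hyp'
      · right
        rw [heq] at hadjxy hs0 hsmax
        refine Relation.ReflTransGen.single (Or.inr ⟨hlm', hadjxy, le_trans hs0 (hsp' hadjxy), ?_⟩)
        intro r hr
        rcases eq_or_ne r p' with rfl | hrne
        · exact le_refl _
        · rw [hsR' hxp' hrne]
          exact le_trans (hsmax r hr) (hsp' hadjxy)
      · by_cases hbig : T.adj x p' ∧ T.slope R x y ≤ T.slope R' x p'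
        · right
          refine Relation.ReflTransGen.single (Or.inr ⟨hlm', hbig.1, le_trans hs0 hbig.2, ?_⟩)
          intro r hr
          rcases eq_or_ne r p' with rfl | hrne
          · exact le_refl _
          · rw [hsR' hxp' hrne]
            exact le_trans (hsmax r hr) hbig.2
        · left
          refine Relation.ReflTransGen.single (Or.inr ⟨hlm', hadjxy, ?_, ?_⟩)
          · rw [hsR' hxp' hyp']; exact hs0
          · intro r hr
            rw [hsR' hxp' hyp']
            rcases eq_or_ne r p' with rfl | hrne
            · by_contra hlt
              push_neg at hlt
              exact hbig ⟨hr, hlt.le⟩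
            · rw [hsR' hxp' hrne]; exact hsmax r hr

/-- If two consecutive vertices of a flow step in the lowermost realization are at
their lowest elevations in `R'`, the step is also a flow step in `R'`. -/
lemma junction {R' : V → ℝ} {p q : V}
    (hstep : T.FlowStep T.low p q) (hlow : ∀ v, T.low v ≤ R' v)
    (hp : R' p = T.low p) (hq : R' q = T.low q) :
    T.FlowStep R' p q := by
  classical
  have hadj : T.adj p q := T.flowStep_adj hstep
  have hd := T.hdist_pos hadj
  have hqp : T.low q ≤ T.low p := by
    rcases hstep with ⟨P, hPm, hpP, hqP, -⟩ | ⟨-, -, hs0, -⟩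
    · exact le_of_eq (hPm.2.2.1 q hqP p hpP)
    · by_contra hlt
      push_neg at hlt
      have hneg : T.slope T.low p q < 0 := by
        rw [T.slope_def]
        exact div_neg_of_neg_of_pos (by linarith) hd
      linarith
  have hsmaxlow : ∀ r, T.adj p r → T.slope T.low p r ≤ T.slope T.low p q := by
    rcases hstep with ⟨P, hPm, hpP, hqP, -⟩ | ⟨-, -, -, hmax⟩
    · intro r hr
      have hpq0 : T.slope T.low p q = 0 := by
        rw [T.slope_def, hPm.2.2.1 p hpP q hqP, sub_self, zero_div]
      rw [hpq0]
      by_cases hrP : r ∈ P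
      · rw [T.slope_def, hPm.2.2.1 p hpP r hrP, sub_self, zero_div]
      · have hrN : r ∈ T.Nbhd P := ⟨hrP, p, hpP, T.adj_symm p r hr⟩
        have h1 := hPm.2.2.2 p hpP r hrN
        have hneg : T.slope T.low p r < 0 := by
          rw [T.slope_def]
          exact div_neg_of_neg_of_pos (by linarith) (T.hdist_pos hr)
        linarith
    · exact hmax
  by_cases hlm : T.InLocalMin R' p
  · obtain ⟨P'', hP'', hpP''⟩ := hlm
    by_cases hqP : q ∈ P''
    · exact Or.inl ⟨P'', hP'', hpP'', hqP, hadj⟩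
    · exfalso
      have hNb : q ∈ T.Nbhd P'' := ⟨hqP, p, hpP'', T.adj_symm p q hadj⟩
      have h1 := hP''.2.2.2 p hpP'' q hNb
      rw [hp, hq] at h1
      linarith
  · refine Or.inr ⟨hlm, hadj, ?_, ?_⟩
    · rw [T.slope_def, hp, hq]
      exact div_nonneg (by linarith) hd.le
    · intro r hr
      have h1 : T.slope R' p r ≤ T.slope T.low p r := by
        rw [T.slope_def, T.slope_def, hp]
        exact (div_le_div_iff_of_pos_right (T.hdist_pos hr)).mpr (by linarith [hlow r])
      have h2 : T.slope T.low p q = T.slope R' p q := by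
        rw [T.slope_def, T.slope_def, hp, hq]
      calc T.slope R' p r ≤ T.slope T.low p r := h1
        _ ≤ T.slope T.low p q := hsmaxlow r hr
        _ = T.slope R' p q := h2

lemma divert {R : V → ℝ} (hR : T.IsRealization R) (p' : V) {x p : V}
    (h : T.FlowsTo R x p) :
    T.FlowsTo (Function.update R p' (T.low p')) x p ∨
      T.FlowsTo (Function.update R p' (T.low p')) x p' := by
  induction h using Relation.ReflTransGen.head_induction_on with
  | refl => exact Or.inl Relation.ReflTransGen.refl
  | @head a b hstep htail ih =>
    rcases T.divert_step hR p' hstep with h1 | h1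
    · rcases ih with h2 | h2
      · exact Or.inl (h1.trans h2)
      · exact Or.inr (h1.trans h2)
    · exact Or.inr h1

lemma extend (hle : ∀ v, T.low v ≤ T.high v) {x p q : V}
    (h : T.FlowsTo T.low p q) :
    ∀ R, T.IsRealization R → T.FlowsTo R x p → R p = T.low p →
      ∃ R', T.IsRealization R' ∧ T.FlowsTo R' x q := by
  induction h using Relation.ReflTransGen.head_induction_on with
  | refl => intro R hR hf _; exact ⟨R, hR, hf⟩
  | @head p p₁ hstep htail ih =>
    intro R hR hf hp
    set R' := Function.update R p₁ (T.low p₁) with hdef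
    have hR' : T.IsRealization R' := T.update_isRealization hR hle p₁
    have hR'p₁ : R' p₁ = T.low p₁ := Function.update_self _ _ _
    have hlowR' : ∀ v, T.low v ≤ R' v := fun v => (hR' v).1
    rcases T.divert hR p₁ hf with h1 | h1
    · have hpne : p ≠ p₁ := T.adj_ne (T.flowStep_adj hstep)
      have hR'p : R' p = T.low p := by
        rw [hdef, Function.update_of_ne hpne]; exact hp
      have hj : T.FlowStep R' p p₁ := T.junction hstep hlowR' hR'p hR'p₁
      exact ih R' hR' (Relation.ReflTransGen.tail h1 hj) hR'p₁
    · exact ih R' hR' h1 hR'p₁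

end ImpTerrain

/-- If `P` is contained in the watershed of `Q` in the lowermost realization,
then the potential watershed of `P` is contained in that of `Q`. -/
theorem stmt6 {V : Type} [Fintype V] [DecidableEq V] (T : ImpTerrain V)
    (hle : ∀ v, T.low v ≤ T.high v) (Q P : Set V)
    (hP : P ⊆ T.WS T.low Q) :
    T.PoWS P ⊆ T.PoWS Q := by
  rintro x ⟨R, hR, p, hpP, hf⟩
  obtain ⟨q, hqQ, hlowflow⟩ := hP hpP
  have hR0 : T.IsRealization (Function.update R p (T.low p)) :=
    T.update_isRealization hR hle p
  have hf0 : T.FlowsTo (Function.update R p (T.low p)) x p := by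
    rcases T.divert hR p hf with h | h <;> exact h
  obtain ⟨R', hR', hf'⟩ :=
    T.extend hle hlowflow (Function.update R p (T.low p)) hR0 hf0
      (Function.update_self _ _ _)
  exact ⟨R', hR', q, hqQ, hf'⟩
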